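/- arXiv:1403.7852 — 4 statements merged into one kernel-verified Lean document; each statement's English description precedes it below -/
import Mathlib

section
/- Let d ≥ 1 and θ = (θ₁,…,θ_d) with θ_d < 0, and A(θ) = ∫₀^∞ exp(θ₁ x + ⋯ + θ_d x^d) dx. Then for each 1 ≤ i ≤ d, ∂_i A(θ) = ∂₁^i A(θ), i.e., differentiating once with respect to θ_i equals differentiating i times with respect to θ₁. -/
open MeasureTheory Real Set Filter Topology

lemma sum_update_eq (θ : ℕ → ℝ) (d m : ℕ) (hm : m ∈ Finset.Icc 1 d) (t x : ℝ) :
    ∑ j ∈ Finset.Icc 1 d, Function.update θ m t j * x ^ j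
      = t * x ^ m + ∑ j ∈ (Finset.Icc 1 d).erase m, θ j * x ^ j := by
  rw [← Finset.add_sum_erase _ _ hm, Function.update_self]
  congr 1
  exact Finset.sum_congr rfl fun j hj => by
    rw [Function.update_of_ne (Finset.ne_of_mem_erase hj)]

lemma lemA (d : ℕ) (hd : 1 ≤ d) (a : ℕ → ℝ) (ha : a d < 0) (k : ℕ) :
    IntegrableOn (fun x : ℝ => x ^ k * Real.exp (∑ j ∈ Finset.Icc 1 d, a j * x ^ j))
      (Set.Ioi 0) := by
  have hb0 : (0:ℝ) < -(a d) / 4 := by linarith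
  set b : ℝ := -(a d) / 4 with hbdef
  have hcont : Continuous (fun x : ℝ => x ^ k *
      Real.exp (∑ j ∈ Finset.Icc 1 d, a j * x ^ j)) := by
    exact (continuous_pow k).mul (Real.continuous_exp.comp
      (continuous_finset_sum _ fun j _ => continuous_const.mul (continuous_pow j)))
  apply integrable_of_isBigO_exp_neg hb0 hcont.continuousOn
  -- eventual bound
  set B : ℝ := ∑ j ∈ (Finset.Icc 1 d).erase d, |a j| with hBdef
  have hP : ∀ᶠ x in atTop, (∑ j ∈ Finset.Icc 1 d, a j * x ^ j) ≤ (a d / 2) * x := by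
    filter_upwards [eventually_ge_atTop (1:ℝ),
      (tendsto_id.const_mul_atTop (show (0:ℝ) < -(a d) by linarith)).eventually_ge_atTop
        (2 * B)] with x hx1 hx2
    have hx0 : (0:ℝ) ≤ x := by linarith
    have hdm : d ∈ Finset.Icc 1 d := Finset.mem_Icc.mpr ⟨hd, le_rfl⟩
    rw [← Finset.add_sum_erase _ _ hdm]
    have hsum : ∑ j ∈ (Finset.Icc 1 d).erase d, a j * x ^ j ≤ B * x ^ (d - 1) := by
      rw [hBdef, Finset.sum_mul]
      refine Finset.sum_le_sum fun j hj => ?_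
      have hj1 : j ≤ d - 1 := by
        have := Finset.mem_Icc.mp (Finset.mem_of_mem_erase hj)
        have := Finset.ne_of_mem_erase hj
        omega
      calc a j * x ^ j ≤ |a j| * x ^ j :=
            mul_le_mul_of_nonneg_right (le_abs_self _) (pow_nonneg hx0 _)
        _ ≤ |a j| * x ^ (d - 1) :=
            mul_le_mul_of_nonneg_left (pow_le_pow_right₀ hx1 hj1) (abs_nonneg _)
    have hxd : x ^ d = x ^ (d - 1) * x := by
      rw [← pow_succ]
      congr 1
      omega
    have hstep : a d * x ^ d + B * x ^ (d - 1) ≤ (a d / 2) * x ^ d := by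
      have h1 : (a d / 2) * x + B ≤ 0 := by
        simp only [id] at hx2
        linarith
      have h2 : x ^ (d - 1) * ((a d / 2) * x + B) ≤ 0 :=
        mul_nonpos_of_nonneg_of_nonpos (pow_nonneg hx0 _) h1
      nlinarith [pow_nonneg hx0 (d - 1)]
    have hxx : x ≤ x ^ d := le_self_pow₀ hx1 (by omega)
    have hlast : (a d / 2) * x ^ d ≤ (a d / 2) * x := by
      have : a d / 2 ≤ 0 := by linarith
      exact mul_le_mul_of_nonpos_left hxx this
    linarith
  have htend : Tendsto (fun x : ℝ => x ^ k * Real.exp (-b * x)) atTop (𝓝 0) := by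
    have h1 := (tendsto_pow_mul_exp_neg_atTop_nhds_zero k).comp
      (tendsto_id.const_mul_atTop hb0)
    have h2 := h1.const_mul ((b⁻¹) ^ k)
    rw [mul_zero] at h2
    convert h2 using 2 with x
    simp only [Function.comp_apply, id]
    rw [mul_pow]
    have hbne : b ≠ 0 := ne_of_gt hb0
    field_simp
    ring_nf
    rw [mul_assoc, ← mul_pow, mul_inv_cancel₀ hbne, one_pow, mul_one]
  have hsmall : ∀ᶠ x in atTop, x ^ k * Real.exp (-b * x) ≤ 1 :=
    htend.eventually (eventually_le_nhds one_pos)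
  refine Asymptotics.IsBigO.of_bound 1 ?_
  filter_upwards [hP, hsmall, eventually_ge_atTop (0:ℝ)] with x hx1 hx2 hx0
  have hnn : (0:ℝ) ≤ x ^ k * Real.exp (∑ j ∈ Finset.Icc 1 d, a j * x ^ j) :=
    mul_nonneg (pow_nonneg hx0 _) (Real.exp_pos _).le
  rw [Real.norm_eq_abs, Real.norm_eq_abs, abs_of_nonneg hnn,
    abs_of_nonneg (Real.exp_pos _).le, one_mul]
  have key : x ^ k * Real.exp (∑ j ∈ Finset.Icc 1 d, a j * x ^ j)
      ≤ x ^ k * Real.exp ((a d / 2) * x) :=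
    mul_le_mul_of_nonneg_left (Real.exp_le_exp.mpr hx1) (pow_nonneg hx0 _)
  have hsplit : Real.exp ((a d / 2) * x) = Real.exp (-b * x) * Real.exp (-b * x) := by
    rw [← Real.exp_add]
    congr 1
    rw [hbdef]; ring
  calc x ^ k * Real.exp (∑ j ∈ Finset.Icc 1 d, a j * x ^ j)
      ≤ x ^ k * Real.exp ((a d / 2) * x) := key
    _ = (x ^ k * Real.exp (-b * x)) * Real.exp (-b * x) := by rw [hsplit]; ring
    _ ≤ 1 * Real.exp (-b * x) :=
        mul_le_mul_of_nonneg_right hx2 (Real.exp_pos _).le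
    _ = Real.exp (-b * x) := one_mul _

lemma lemB (d : ℕ) (hd : 1 ≤ d) (a : ℕ → ℝ) (m : ℕ) (hm : m ∈ Finset.Icc 1 d)
    (k : ℕ) (t₀ δ : ℝ) (hδ : 0 < δ) (hlead : Function.update a m (t₀ + δ) d < 0) :
    HasDerivAt (fun t => ∫ x in Set.Ioi (0:ℝ),
        x ^ k * Real.exp (∑ j ∈ Finset.Icc 1 d, Function.update a m t j * x ^ j))
      (∫ x in Set.Ioi (0:ℝ),
        x ^ (k + m) * Real.exp (∑ j ∈ Finset.Icc 1 d, Function.update a m t₀ j * x ^ j)) t₀ := by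
  have hlt : ∀ t ∈ Metric.ball t₀ δ, Function.update a m t d < 0 := by
    intro t ht
    rcases eq_or_ne m d with rfl | hne
    · rw [Function.update_self]
      rw [Function.update_self] at hlead
      have := Real.ball_eq_Ioo t₀ δ ▸ ht
      exact this.2.trans hlead
    · rw [Function.update_of_ne (Ne.symm hne)]
      rwa [Function.update_of_ne (Ne.symm hne)] at hlead
  have hmeas : ∀ t : ℝ, AEStronglyMeasurable
      (fun x : ℝ => x ^ k * Real.exp (∑ j ∈ Finset.Icc 1 d, Function.update a m t j * x ^ j))
      (volume.restrict (Set.Ioi 0)) := fun t =>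
    ((continuous_pow k).mul (Real.continuous_exp.comp
      (continuous_finset_sum _ fun j _ => continuous_const.mul (continuous_pow j)))).aestronglyMeasurable
  have ht₀ : t₀ ∈ Metric.ball t₀ δ := Metric.mem_ball_self hδ
  have key := hasDerivAt_integral_of_dominated_loc_of_deriv_le (μ := volume.restrict (Set.Ioi 0))
    (F := fun t x => x ^ k * Real.exp (∑ j ∈ Finset.Icc 1 d, Function.update a m t j * x ^ j))
    (F' := fun t x => x ^ (k + m) * Real.exp (∑ j ∈ Finset.Icc 1 d, Function.update a m t j * x ^ j))
    (x₀ := t₀)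
    (bound := fun x => x ^ (k + m) * Real.exp (∑ j ∈ Finset.Icc 1 d, Function.update a m (t₀ + δ) j * x ^ j))
    (Metric.ball_mem_nhds t₀ hδ) (Filter.Eventually.of_forall hmeas) (lemA d hd _ (hlt t₀ ht₀) k)
    (((continuous_pow (k + m)).mul (Real.continuous_exp.comp
      (continuous_finset_sum _ fun j _ => continuous_const.mul (continuous_pow j)))).aestronglyMeasurable)
    ?_ (lemA d hd _ hlead (k + m)) ?_
  · exact key.2
  · -- bound
    rw [ae_restrict_iff' measurableSet_Ioi]
    refine Filter.Eventually.of_forall fun x hx => fun t ht => ?_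
    have hx0 : (0:ℝ) < x := hx
    have hnn : (0:ℝ) ≤ x ^ (k + m) *
        Real.exp (∑ j ∈ Finset.Icc 1 d, Function.update a m t j * x ^ j) :=
      mul_nonneg (pow_nonneg hx0.le _) (Real.exp_pos _).le
    rw [Real.norm_eq_abs, abs_of_nonneg hnn]
    refine mul_le_mul_of_nonneg_left (Real.exp_le_exp.mpr ?_) (pow_nonneg hx0.le _)
    rw [sum_update_eq a d m hm, sum_update_eq a d m hm]
    have hle : t ≤ t₀ + δ := by
      have := Real.ball_eq_Ioo t₀ δ ▸ ht
      linarith [this.2]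
    exact add_le_add_left (mul_le_mul_of_nonneg_right hle (pow_nonneg hx0.le _)) _
  · -- differentiability
    refine Filter.Eventually.of_forall fun x => fun t _ => ?_
    have hfun : (fun s : ℝ => x ^ k * Real.exp (∑ j ∈ Finset.Icc 1 d, Function.update a m s j * x ^ j))
        = fun s : ℝ => x ^ k * Real.exp (s * x ^ m + ∑ j ∈ (Finset.Icc 1 d).erase m, a j * x ^ j) := by
      funext s; rw [sum_update_eq a d m hm]
    rw [hfun]
    have h1 : HasDerivAt (fun s : ℝ => s * x ^ m + ∑ j ∈ (Finset.Icc 1 d).erase m, a j * x ^ j)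
        (x ^ m) t := (hasDerivAt_mul_const (x ^ m)).add_const _
    have h2 := (h1.exp).const_mul (x ^ k)
    convert h2 using 1
    show x ^ (k + m) * Real.exp (∑ j ∈ Finset.Icc 1 d, Function.update a m t j * x ^ j) = _
    rw [sum_update_eq a d m hm, pow_add]
    ring
    rfl

theorem stmt3 (d : ℕ) (hd : 1 ≤ d) (θ : ℕ → ℝ) (hθ : θ d < 0)
    (i : ℕ) (hi1 : 1 ≤ i) (hid : i ≤ d) :
    deriv (fun t => ∫ x in Set.Ioi (0:ℝ),
        Real.exp (∑ j ∈ Finset.Icc 1 d, Function.update θ i t j * x ^ j)) (θ i)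
    = iteratedDeriv i (fun t => ∫ x in Set.Ioi (0:ℝ),
        Real.exp (∑ j ∈ Finset.Icc 1 d, Function.update θ 1 t j * x ^ j)) (θ 1) := by
  have hmi : i ∈ Finset.Icc 1 d := Finset.mem_Icc.mpr ⟨hi1, hid⟩
  have hm1 : 1 ∈ Finset.Icc 1 d := Finset.mem_Icc.mpr ⟨le_rfl, hd⟩
  -- LHS
  have hLHS : deriv (fun t => ∫ x in Set.Ioi (0:ℝ),
      Real.exp (∑ j ∈ Finset.Icc 1 d, Function.update θ i t j * x ^ j)) (θ i)
      = ∫ x in Set.Ioi (0:ℝ), x ^ i * Real.exp (∑ j ∈ Finset.Icc 1 d, θ j * x ^ j) := by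
    have hδ : (0:ℝ) < -θ d / 2 := by linarith
    have hlead : Function.update θ i (θ i + -θ d / 2) d < 0 := by
      rcases eq_or_ne i d with rfl | hne
      · rw [Function.update_self]; linarith
      · rw [Function.update_of_ne (Ne.symm hne)]; exact hθ
    have hB := lemB d hd θ i hmi 0 (θ i) (-θ d / 2) hδ hlead
    rw [Function.update_eq_self] at hB
    simp only [pow_zero, one_mul, zero_add] at hB
    exact hB.deriv
  rw [hLHS]
  -- RHS
  set U : Set ℝ := {t : ℝ | Function.update θ 1 t d < 0} with hUdef
  have hUopen : IsOpen U := by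
    have hc : Continuous (fun t : ℝ => Function.update θ 1 t d) := by
      rcases eq_or_ne d 1 with rfl | hne
      · simpa [Function.update_self] using continuous_id'
      · simp only [Function.update_of_ne hne]
        exact continuous_const
    exact isOpen_lt hc continuous_const
  have hθ1U : θ 1 ∈ U := by
    simp only [hUdef, Set.mem_setOf_eq, Function.update_eq_self]
    exact hθ
  have hind : ∀ k : ℕ, ∀ t ∈ U, iteratedDeriv k (fun t => ∫ x in Set.Ioi (0:ℝ),
      Real.exp (∑ j ∈ Finset.Icc 1 d, Function.update θ 1 t j * x ^ j)) t
      = ∫ x in Set.Ioi (0:ℝ),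
          x ^ k * Real.exp (∑ j ∈ Finset.Icc 1 d, Function.update θ 1 t j * x ^ j) := by
    intro k
    induction k with
    | zero => intro t _; simp [iteratedDeriv_zero]
    | succ k ih =>
      intro t ht
      rw [iteratedDeriv_succ]
      have heq : (iteratedDeriv k (fun t => ∫ x in Set.Ioi (0:ℝ),
          Real.exp (∑ j ∈ Finset.Icc 1 d, Function.update θ 1 t j * x ^ j)))
          =ᶠ[nhds t] (fun s => ∫ x in Set.Ioi (0:ℝ),
          x ^ k * Real.exp (∑ j ∈ Finset.Icc 1 d, Function.update θ 1 s j * x ^ j)) :=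
        Filter.eventuallyEq_of_mem (hUopen.mem_nhds ht) ih
      rw [heq.deriv_eq]
      obtain ⟨ε, hε0, hball⟩ := Metric.isOpen_iff.mp hUopen t ht
      have hmem : t + ε / 2 ∈ U := by
        apply hball
        simp only [Metric.mem_ball, Real.dist_eq]
        rw [abs_of_nonneg (by linarith)]
        · linarith
      have hB := lemB d hd θ 1 hm1 k t (ε / 2) (by linarith) hmem
      exact hB.deriv
  rw [hind i (θ 1) hθ1U, Function.update_eq_self]
end

section
/- Let d ≥ 1 and θ = (θ₁,…,θ_d) with θ_d < 0, and A(θ) = ∫₀^∞ exp(θ₁ x + ⋯ + θ_d x^d) dx. Then A satisfies the differential equation (θ₁ + 2θ₂ ∂₁ + 3θ₃ ∂₁² + ⋯ + d θ_d ∂₁^{d-1}) A(θ) = -1, where ∂₁ is differentiation with respect to θ₁. -/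
open MeasureTheory

section Stmt4Aux
open Real Set Filter

lemma sum_update (d : ℕ) (hd : 1 ≤ d) (θ : ℕ → ℝ) (s x : ℝ) :
    ∑ k ∈ Finset.Icc 1 d, Function.update θ 1 s k * x ^ k
      = s * x + ∑ k ∈ Finset.Icc 2 d, θ k * x ^ k := by
  rw [← Finset.Ioc_insert_left hd, Finset.sum_insert (by simp), ← Finset.Icc_add_one_left_eq_Ioc]
  simp only [Function.update_self, pow_one]
  congr 1
  refine Finset.sum_congr rfl fun k hk => ?_
  rw [Function.update_of_ne (by simp at hk; omega)]

lemma pow_le_exp' (i : ℕ) {ε : ℝ} (hε : 0 < ε) :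
    ∃ C > 0, ∀ x ≥ (0:ℝ), x ^ i ≤ C * Real.exp (ε * x) := by
  refine ⟨(Nat.factorial i : ℝ) / ε ^ i, by positivity, fun x hx => ?_⟩
  have h := Real.pow_div_factorial_le_exp (x := ε * x) (by positivity) i
  rw [mul_pow] at h
  have h1 : (0:ℝ) < ε ^ i := pow_pos hε i
  have h2 : (0:ℝ) < (Nat.factorial i : ℝ) := by exact_mod_cast Nat.factorial_pos i
  rw [div_le_iff₀ h2] at h
  rw [div_mul_eq_mul_div, le_div_iff₀ h1]
  nlinarith

lemma eventual_bound (d : ℕ) (hd : 1 ≤ d) (a : ℕ → ℝ) (ha : a d < 0) :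
    ∃ ε > (0:ℝ), ∃ X ≥ (1:ℝ), ∀ x ≥ X, ∑ k ∈ Finset.Icc 1 d, a k * x ^ k ≤ -(2*ε) * x := by
  have hε0 : (0:ℝ) < min 1 (-(a d)/2) := lt_min one_pos (by linarith)
  refine ⟨min 1 (-(a d)/2), hε0, ?_⟩
  set ε := min 1 (-(a d)/2) with hεdef
  have hε2 : 2*ε ≤ -(a d) := by
    have := min_le_right 1 (-(a d)/2); rw [← hεdef] at this; linarith
  rcases eq_or_lt_of_le hd with h1 | h2
  · refine ⟨1, le_refl 1, fun x hx => ?_⟩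
    rw [← h1]
    simp only [Finset.Icc_self, Finset.sum_singleton, pow_one]
    have : a 1 = a d := by rw [← h1]
    nlinarith
  · set M := ∑ k ∈ Finset.Icc 1 (d-1), |a k| with hMdef
    have hM : 0 ≤ M := Finset.sum_nonneg fun _ _ => abs_nonneg _
    refine ⟨max 1 ((M + 2*ε)/(-(a d))), le_max_left _ _, fun x hx => ?_⟩
    have hx1 : 1 ≤ x := le_trans (le_max_left _ _) hx
    have hx0 : 0 < x := by linarith
    have hxd : M + 2*ε ≤ -(a d) * x := by
      have h := le_trans (le_max_right 1 ((M + 2*ε)/(-(a d)))) hx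
      rw [div_le_iff₀ (by linarith : (0:ℝ) < -(a d))] at h
      linarith
    have hsplit : Finset.Icc 1 d = insert d (Finset.Icc 1 (d-1)) := by
      ext k; simp only [Finset.mem_Icc, Finset.mem_insert]; omega
    rw [hsplit, Finset.sum_insert (by simp; omega)]
    have hsum : ∑ k ∈ Finset.Icc 1 (d-1), a k * x ^ k ≤ M * x ^ (d-1) := by
      rw [hMdef, Finset.sum_mul]
      refine Finset.sum_le_sum fun k hk => ?_
      have hk' : k ≤ d - 1 := (Finset.mem_Icc.mp hk).2
      have hxk : x ^ k ≤ x ^ (d-1) := pow_le_pow_right₀ hx1 hk'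
      have h1 : a k * x ^ k ≤ |a k| * x ^ k :=
        mul_le_mul_of_nonneg_right (le_abs_self _) (pow_nonneg hx0.le k)
      have h2 : |a k| * x ^ k ≤ |a k| * x ^ (d-1) :=
        mul_le_mul_of_nonneg_left hxk (abs_nonneg _)
      linarith
    have hxd1 : x ^ d = x * x ^ (d-1) := by
      rw [← pow_succ']; congr 1; omega
    have hle : x ≤ x ^ (d-1) := by
      calc x = x ^ 1 := (pow_one x).symm
        _ ≤ x ^ (d-1) := pow_le_pow_right₀ hx1 (by omega)
    rw [hxd1]
    nlinarith [pow_pos hx0 (d-1)]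

lemma key_int (d i : ℕ) (hd : 1 ≤ d) (a : ℕ → ℝ) (ha : a d < 0) :
    IntegrableOn (fun x => x ^ i * Real.exp (∑ k ∈ Finset.Icc 1 d, a k * x ^ k)) (Set.Ioi 0) := by
  obtain ⟨ε, hε, X, hX1, hX⟩ := eventual_bound d hd a ha
  obtain ⟨C, hC, hCb⟩ := pow_le_exp' i hε
  have hcont : Continuous fun x : ℝ => x ^ i * Real.exp (∑ k ∈ Finset.Icc 1 d, a k * x ^ k) := by
    fun_prop
  have h1 : IntegrableOn (fun x => x ^ i * Real.exp (∑ k ∈ Finset.Icc 1 d, a k * x ^ k))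
      (Set.Ioc 0 X) := hcont.integrableOn_Ioc
  have hexp : IntegrableOn (fun x => C * Real.exp (-ε * x)) (Set.Ioi X) :=
    (exp_neg_integrableOn_Ioi X hε).const_mul C
  have h2 : IntegrableOn (fun x => x ^ i * Real.exp (∑ k ∈ Finset.Icc 1 d, a k * x ^ k))
      (Set.Ioi X) := by
    refine Integrable.mono hexp (hcont.aestronglyMeasurable.restrict) ?_
    filter_upwards [ae_restrict_mem measurableSet_Ioi] with x hx
    have hxX : X < x := hx
    have hx0 : 0 < x := lt_of_lt_of_le one_pos (hX1.trans hxX.le)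
    have hg := hX x hxX.le
    rw [Real.norm_eq_abs, Real.norm_eq_abs, abs_of_nonneg (by positivity),
      abs_of_nonneg (by positivity)]
    calc x ^ i * Real.exp (∑ k ∈ Finset.Icc 1 d, a k * x ^ k)
        ≤ (C * Real.exp (ε * x)) * Real.exp (∑ k ∈ Finset.Icc 1 d, a k * x ^ k) :=
          mul_le_mul_of_nonneg_right (hCb x hx0.le) (Real.exp_nonneg _)
      _ ≤ (C * Real.exp (ε * x)) * Real.exp (-(2*ε) * x) :=
          mul_le_mul_of_nonneg_left (Real.exp_le_exp.2 hg) (by positivity)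
      _ = C * Real.exp (-ε * x) := by
          rw [mul_assoc, ← Real.exp_add]; ring_nf
  refine (h1.union h2).mono_set fun x hx => ?_
  rcases le_or_gt x X with h | h
  · exact Or.inl ⟨hx, h⟩
  · exact Or.inr h





lemma hasDeriv (d : ℕ) (hd : 2 ≤ d) (θ : ℕ → ℝ) (hθ : θ d < 0) (i : ℕ) (t₀ : ℝ) :
    HasDerivAt (fun t => ∫ x in Set.Ioi (0:ℝ),
        x ^ i * Real.exp (t * x + ∑ k ∈ Finset.Icc 2 d, θ k * x ^ k))
      (∫ x in Set.Ioi (0:ℝ),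
        x ^ (i+1) * Real.exp (t₀ * x + ∑ k ∈ Finset.Icc 2 d, θ k * x ^ k)) t₀ := by
  have hd1 : 1 ≤ d := by omega
  have hupd : ∀ s : ℝ, Function.update θ 1 s d = θ d :=
    fun s => Function.update_of_ne (by omega) _ _
  have hint : ∀ (j : ℕ) (s : ℝ), IntegrableOn
      (fun x => x ^ j * Real.exp (s * x + ∑ k ∈ Finset.Icc 2 d, θ k * x ^ k)) (Set.Ioi 0) := by
    intro j s
    have := key_int d j hd1 (Function.update θ 1 s) (by rw [hupd]; exact hθ)
    simpa only [sum_update d hd1 θ s] using this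
  refine (hasDerivAt_integral_of_dominated_loc_of_deriv_le
    (F := fun t x => x ^ i * Real.exp (t * x + ∑ k ∈ Finset.Icc 2 d, θ k * x ^ k))
    (F' := fun t x => x ^ (i+1) * Real.exp (t * x + ∑ k ∈ Finset.Icc 2 d, θ k * x ^ k))
    (bound := fun x => x ^ (i+1) * Real.exp ((|t₀|+1) * x + ∑ k ∈ Finset.Icc 2 d, θ k * x ^ k))
    (Metric.ball_mem_nhds t₀ one_pos) ?_ (hint i t₀) ?_ ?_ (hint (i+1) (|t₀|+1)) ?_).2
  · exact Eventually.of_forall fun t => (Continuous.aestronglyMeasurable (by fun_prop)).restrict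
  · exact (Continuous.aestronglyMeasurable (by fun_prop)).restrict
  · filter_upwards [ae_restrict_mem measurableSet_Ioi] with x hx t ht
    have hx0 : (0:ℝ) < x := hx
    rw [Real.norm_eq_abs, abs_of_nonneg (by positivity)]
    have htle : t ≤ |t₀| + 1 := by
      rw [Metric.mem_ball, Real.dist_eq] at ht
      rcases abs_lt.mp ht with ⟨h1, h2⟩
      rcases abs_cases t₀ with ⟨h3, _⟩ | ⟨h3, _⟩ <;> linarith
    exact mul_le_mul_of_nonneg_left (Real.exp_le_exp.2 (by nlinarith)) (by positivity)
  · filter_upwards [ae_restrict_mem measurableSet_Ioi] with x hx t _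
    have h1 : HasDerivAt (fun t : ℝ => t * x + ∑ k ∈ Finset.Icc 2 d, θ k * x ^ k) x t := by
      simpa using ((hasDerivAt_id t).mul_const x).add_const
        (∑ k ∈ Finset.Icc 2 d, θ k * x ^ k)
    have h2 := h1.exp.const_mul (x ^ i)
    convert h2 using 1
    · rfl
    rw [pow_succ]; ring

lemma iter (d : ℕ) (hd : 2 ≤ d) (θ : ℕ → ℝ) (hθ : θ d < 0) (n : ℕ) : ∀ i : ℕ,
    iteratedDeriv n (fun t => ∫ x in Set.Ioi (0:ℝ),
        x ^ i * Real.exp (t * x + ∑ k ∈ Finset.Icc 2 d, θ k * x ^ k))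
      = fun t => ∫ x in Set.Ioi (0:ℝ),
        x ^ (n + i) * Real.exp (t * x + ∑ k ∈ Finset.Icc 2 d, θ k * x ^ k) := by
  induction n with
  | zero => intro i; simp [iteratedDeriv_zero]
  | succ n ih =>
    intro i
    rw [iteratedDeriv_succ']
    have hder : deriv (fun t => ∫ x in Set.Ioi (0:ℝ),
        x ^ i * Real.exp (t * x + ∑ k ∈ Finset.Icc 2 d, θ k * x ^ k))
        = fun t => ∫ x in Set.Ioi (0:ℝ),
          x ^ (i+1) * Real.exp (t * x + ∑ k ∈ Finset.Icc 2 d, θ k * x ^ k) := by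
      funext t; exact (hasDeriv d hd θ hθ i t).deriv
    rw [hder, ih (i+1), show n + (i+1) = n + 1 + i from by omega]









theorem stmt4 (d : ℕ) (hd : 1 ≤ d) (θ : ℕ → ℝ) (hθ : θ d < 0) :
    ∑ j ∈ Finset.Icc 1 d, (j : ℝ) * θ j *
      iteratedDeriv (j - 1) (fun t => ∫ x in Set.Ioi (0:ℝ),
        Real.exp (∑ k ∈ Finset.Icc 1 d, Function.update θ 1 t k * x ^ k)) (θ 1)
    = -1 := by
  have hG : ∀ x : ℝ, ∑ k ∈ Finset.Icc 1 d, θ k * x ^ k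
      = θ 1 * x + ∑ k ∈ Finset.Icc 2 d, θ k * x ^ k := by
    intro x
    have h := sum_update d hd θ (θ 1) x
    rwa [Function.update_eq_self] at h
  have hA : (fun t => ∫ x in Set.Ioi (0:ℝ),
        Real.exp (∑ k ∈ Finset.Icc 1 d, Function.update θ 1 t k * x ^ k))
      = fun t => ∫ x in Set.Ioi (0:ℝ),
        x ^ 0 * Real.exp (t * x + ∑ k ∈ Finset.Icc 2 d, θ k * x ^ k) := by
    funext t
    simp only [sum_update d hd θ t, pow_zero, one_mul]
  have hterm : ∀ j ∈ Finset.Icc 1 d, iteratedDeriv (j-1) (fun t => ∫ x in Set.Ioi (0:ℝ),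
        Real.exp (∑ k ∈ Finset.Icc 1 d, Function.update θ 1 t k * x ^ k)) (θ 1)
      = ∫ x in Set.Ioi (0:ℝ),
        x ^ (j-1) * Real.exp (θ 1 * x + ∑ k ∈ Finset.Icc 2 d, θ k * x ^ k) := by
    intro j hj
    rw [hA]
    rcases Nat.lt_or_ge j 2 with h | h
    · have hj1 : j = 1 := by simp only [Finset.mem_Icc] at hj; omega
      subst hj1
      simp [iteratedDeriv_zero]
    · have hd2 : 2 ≤ d := le_trans h (Finset.mem_Icc.mp hj).2
      rw [iter d hd2 θ hθ (j-1) 0, Nat.add_zero]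
  rw [Finset.sum_congr rfl fun j hj => by rw [hterm j hj]]
  have hint : ∀ j : ℕ, IntegrableOn
      (fun x => x ^ (j-1) * Real.exp (θ 1 * x + ∑ k ∈ Finset.Icc 2 d, θ k * x ^ k))
      (Set.Ioi 0) := by
    intro j
    have h := key_int d (j-1) hd θ hθ
    simpa only [hG] using h
  have hswap : ∑ j ∈ Finset.Icc 1 d, (j:ℝ) * θ j * ∫ x in Set.Ioi (0:ℝ),
        x ^ (j-1) * Real.exp (θ 1 * x + ∑ k ∈ Finset.Icc 2 d, θ k * x ^ k)
      = ∫ x in Set.Ioi (0:ℝ), ∑ j ∈ Finset.Icc 1 d,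
        (j:ℝ) * θ j * (x ^ (j-1) * Real.exp (θ 1 * x + ∑ k ∈ Finset.Icc 2 d, θ k * x ^ k)) := by
    rw [integral_finset_sum _ fun j _ => (hint j).const_mul _]
    exact Finset.sum_congr rfl fun j _ => (integral_const_mul _ _).symm
  rw [hswap]
  have hder : ∀ x ∈ Set.Ioi (0:ℝ),
      HasDerivAt (fun x => Real.exp (∑ k ∈ Finset.Icc 1 d, θ k * x ^ k))
      (∑ j ∈ Finset.Icc 1 d,
        (j:ℝ) * θ j * (x ^ (j-1) * Real.exp (θ 1 * x + ∑ k ∈ Finset.Icc 2 d, θ k * x ^ k))) x := by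
    intro x _
    have h1 : HasDerivAt (fun x : ℝ => ∑ k ∈ Finset.Icc 1 d, θ k * x ^ k)
        (∑ k ∈ Finset.Icc 1 d, θ k * ((k:ℝ) * x ^ (k-1))) x :=
      HasDerivAt.fun_sum fun k _ => (hasDerivAt_pow k x).const_mul (θ k)
    convert h1.exp using 1
    rw [Finset.mul_sum]
    refine Finset.sum_congr rfl fun k _ => ?_
    rw [← hG x]
    ring
  have htend : Tendsto (fun x => Real.exp (∑ k ∈ Finset.Icc 1 d, θ k * x ^ k))
      atTop (nhds 0) := by
    obtain ⟨ε, hε, X, hX1, hX⟩ := eventual_bound d hd θ hθ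
    refine squeeze_zero' (g := fun x => Real.exp (-(2*ε)*x)) (Eventually.of_forall fun x => Real.exp_nonneg _) ?_ ?_
    · filter_upwards [eventually_ge_atTop X] with x hx
      exact Real.exp_le_exp.2 (hX x hx)
    · have h1 : Tendsto (fun x : ℝ => -(2*ε) * x) atTop atBot := by
        have h2 := (tendsto_id (α := ℝ) (x := atTop)).const_mul_atTop (by linarith : (0:ℝ) < 2*ε)
        have h3 := tendsto_neg_atBot_iff.mpr h2
        simpa [neg_mul] using h3
      exact Real.tendsto_exp_atBot.comp h1
  have hfint : IntegrableOn (fun x => ∑ j ∈ Finset.Icc 1 d,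
      (j:ℝ) * θ j * (x ^ (j-1) * Real.exp (θ 1 * x + ∑ k ∈ Finset.Icc 2 d, θ k * x ^ k)))
      (Set.Ioi 0) := integrable_finset_sum _ fun j _ => (hint j).const_mul _
  rw [integral_Ioi_of_hasDerivAt_of_tendsto
    (Continuous.continuousWithinAt (by fun_prop)) hder hfint htend]
  have hG0 : ∑ k ∈ Finset.Icc 1 d, θ k * (0:ℝ) ^ k = 0 := by
    refine Finset.sum_eq_zero fun k hk => ?_
    have hk1 := (Finset.mem_Icc.mp hk).1
    rw [zero_pow (by omega : k ≠ 0), mul_zero]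
  rw [hG0, Real.exp_zero]
  ring

end Stmt4Aux
end

section
/- Let d ≥ 1 and θ = (θ₁,…,θ_{2d}) with θ_{2d} < 0, and A(θ) = ∫_{-∞}^∞ exp(θ₁ x + ⋯ + θ_{2d} x^{2d}) dx. Then A satisfies (θ₁ + 2θ₂ ∂₁ + 3θ₃ ∂₁² + ⋯ + 2d θ_{2d} ∂₁^{2d-1}) A(θ) = 0. -/
open MeasureTheory Real Filter Polynomial Set Metric

noncomputable def S (m : ℕ) (c : ℕ → ℝ) (x : ℝ) : ℝ := ∑ k ∈ Finset.Icc 1 m, c k * x ^ k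

lemma S_update_add (m : ℕ) (hm : 1 ≤ m) (c : ℕ → ℝ) (b x : ℝ) :
    S m (Function.update c 1 (c 1 + b)) x = S m c x + b * x := by
  have h1 : (1 : ℕ) ∈ Finset.Icc 1 m := by simp [hm]
  unfold S
  rw [← Finset.add_sum_erase _ _ h1, ← Finset.add_sum_erase _ (fun k => c k * x ^ k) h1]
  have : ∑ k ∈ (Finset.Icc 1 m).erase 1, Function.update c 1 (c 1 + b) k * x ^ k
      = ∑ k ∈ (Finset.Icc 1 m).erase 1, c k * x ^ k := by
    refine Finset.sum_congr rfl fun k hk => ?_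
    rw [Function.update_of_ne (Finset.ne_of_mem_erase hk)]
  rw [this, Function.update_self]
  ring

lemma S_tendsto_atBot (m : ℕ) (hm : 1 ≤ m) (c : ℕ → ℝ) (hc : c m < 0) :
    Tendsto (fun x : ℝ => S m c x) atTop atBot := by
  set p : ℝ[X] := ∑ k ∈ Finset.Icc 1 m, Polynomial.C (c k) * Polynomial.X ^ k with hp
  have heval : ∀ x : ℝ, p.eval x = S m c x := by
    intro x; simp [hp, S, Polynomial.eval_finset_sum]
  have hcoeff : p.coeff m = c m := by
    simp only [hp, Polynomial.finset_sum_coeff, Polynomial.coeff_C_mul,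
      Polynomial.coeff_X_pow]
    rw [Finset.sum_congr rfl (fun k _ => by rw [mul_ite, mul_one, mul_zero]),
      Finset.sum_ite_eq (Finset.Icc 1 m) m c]
    simp [hm]
  have hdeg : p.degree ≤ (m : ℕ∞) := by
    refine (Polynomial.degree_sum_le _ _).trans ?_
    refine Finset.sup_le fun k hk => ?_
    exact (Polynomial.degree_C_mul_X_pow_le _ _).trans
      (by exact_mod_cast Nat.cast_le.mpr (Finset.mem_Icc.mp hk).2)
  have hcoeffne : p.coeff m ≠ 0 := by rw [hcoeff]; exact hc.ne
  have hnd : p.natDegree = m :=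
    le_antisymm (Polynomial.natDegree_le_iff_degree_le.2 hdeg)
      (Polynomial.le_natDegree_of_ne_zero hcoeffne)
  have hlc : p.leadingCoeff = c m := by rw [Polynomial.leadingCoeff, hnd, hcoeff]
  have hdpos : 0 < p.degree := by
    refine lt_of_lt_of_le ?_ (Polynomial.le_degree_of_ne_zero hcoeffne)
    exact_mod_cast hm
  have := Polynomial.tendsto_atBot_of_leadingCoeff_nonpos p hdpos (by rw [hlc]; exact hc.le)
  exact this.congr fun x => heval x

lemma pow_mul_exp_tendsto (m : ℕ) (hm : 2 ≤ m) (c : ℕ → ℝ) (hc : c m < 0) (n : ℕ) :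
    Tendsto (fun x : ℝ => x ^ n * Real.exp (S m c x)) atTop (nhds 0) := by
  set c' := Function.update c 1 (c 1 + 1) with hc'def
  have hc' : c' m < 0 := by
    rw [hc'def, Function.update_of_ne (by omega)]; exact hc
  have hS : ∀ x, S m c' x = S m c x + x := by
    intro x; rw [hc'def, S_update_add m (by omega) c 1 x, one_mul]
  have key : Tendsto (fun x : ℝ => (x ^ n * Real.exp (-x)) * Real.exp (S m c' x))
      atTop (nhds 0) := by
    have h1 := tendsto_pow_mul_exp_neg_atTop_nhds_zero n
    have h2 := Real.tendsto_exp_atBot.comp (S_tendsto_atBot m (by omega) c' hc')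
    simpa using h1.mul h2
  refine key.congr fun x => ?_
  rw [hS, Real.exp_add, mul_assoc, ← mul_assoc (Real.exp (-x)), ← Real.exp_add,
    ← Real.exp_add]
  congr 2
  ring

lemma S_continuous (m : ℕ) (c : ℕ → ℝ) : Continuous (fun x : ℝ => S m c x) := by
  unfold S; fun_prop

lemma integrableOn_Ioi_aux (m : ℕ) (hm : 2 ≤ m) (c : ℕ → ℝ) (hc : c m < 0) (n : ℕ)
    (a : ℝ) :
    IntegrableOn (fun x : ℝ => |x| ^ n * Real.exp (a * |x| + S m c x)) (Ioi 0) := by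
  have hcont : Continuous (fun x : ℝ => |x| ^ n * Real.exp (a * |x| + S m c x)) := by
    have := S_continuous m c; fun_prop
  refine integrable_of_isBigO_exp_neg (f := fun x => |x| ^ n * Real.exp (a * |x| + S m c x))
    (a := 0) (b := 1) one_pos hcont.continuousOn ?_
  set c₂ := Function.update c 1 (c 1 + (a + 1)) with hc₂def
  have hc₂ : c₂ m < 0 := by rw [hc₂def, Function.update_of_ne (by omega)]; exact hc
  have hS : ∀ x, S m c₂ x = S m c x + (a + 1) * x := fun x =>
    S_update_add m (by omega) c (a + 1) x
  have h := (pow_mul_exp_tendsto m hm c₂ hc₂ n).abs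
  have h1 : ∀ᶠ x : ℝ in atTop, |x ^ n * Real.exp (S m c₂ x)| < 1 := by
    refine h.eventually_lt_const ?_; simp
  rw [Asymptotics.isBigO_iff]
  refine ⟨1, ?_⟩
  filter_upwards [h1, eventually_ge_atTop (0 : ℝ)] with x hx hx0
  have habs : |x| = x := abs_of_nonneg hx0
  have hfx : |x| ^ n * Real.exp (a * |x| + S m c x)
      = |x ^ n * Real.exp (S m c₂ x)| * Real.exp (-1 * x) := by
    rw [abs_mul, abs_of_pos (Real.exp_pos _), habs, abs_pow, habs, hS, mul_assoc,
      ← Real.exp_add]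
    congr 2
    ring
  rw [Real.norm_eq_abs, Real.norm_eq_abs, abs_of_nonneg (by positivity), hfx,
    abs_of_pos (Real.exp_pos _), one_mul]
  exact mul_le_of_le_one_left (Real.exp_pos _).le hx.le

lemma S_neg (m : ℕ) (c : ℕ → ℝ) (x : ℝ) :
    S m c (-x) = S m (fun k => (-1 : ℝ) ^ k * c k) x := by
  unfold S
  refine Finset.sum_congr rfl fun k _ => ?_
  rw [neg_pow]; ring

lemma integrable_full (m : ℕ) (hm : 2 ≤ m) (hme : Even m) (c : ℕ → ℝ) (hc : c m < 0)
    (n : ℕ) (a : ℝ) :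
    Integrable (fun x : ℝ => |x| ^ n * Real.exp (a * |x| + S m c x)) := by
  set f := fun x : ℝ => |x| ^ n * Real.exp (a * |x| + S m c x) with hf
  have hIoi : IntegrableOn f (Ioi 0) := integrableOn_Ioi_aux m hm c hc n a
  set c' := fun k => (-1 : ℝ) ^ k * c k with hc'def
  have hc' : c' m < 0 := by
    rw [hc'def]; simp only [hme.neg_one_pow, one_mul]; exact hc
  have hIoi' : IntegrableOn (fun x => f (-x)) (Ioi 0) := by
    have := integrableOn_Ioi_aux m hm c' hc' n a
    refine this.congr_fun (fun x _ => ?_) measurableSet_Ioi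
    rw [hf]; simp only [abs_neg, S_neg]; rfl
  have hIio : IntegrableOn f (Iio 0) := by
    have h_map : (volume.restrict (Ioi (0:ℝ))).map Neg.neg = volume.restrict (Iio 0) := by
      conv => rhs; rw [← Measure.map_neg_eq_self (volume : Measure ℝ),
        measurableEmbedding_neg.restrict_map]
      congr 1
      simp
    rw [IntegrableOn, ← h_map, measurableEmbedding_neg.integrable_map_iff]
    exact hIoi'
  have hIic : IntegrableOn f (Iic 0) := by
    rwa [integrableOn_Iic_iff_integrableOn_Iio]
  rw [← integrableOn_univ, ← Set.Iic_union_Ioi (a := (0:ℝ)), integrableOn_union]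
  exact ⟨hIic, hIoi⟩

lemma integrable_pow_exp (m : ℕ) (hm : 2 ≤ m) (hme : Even m) (c : ℕ → ℝ) (hc : c m < 0)
    (n : ℕ) :
    Integrable (fun x : ℝ => x ^ n * Real.exp (S m c x)) := by
  refine (integrable_full m hm hme c hc n 0).mono' ?_ (ae_of_all _ fun x => ?_)
  · have h := S_continuous m c
    exact (Continuous.mul (by fun_prop) (by fun_prop)).aestronglyMeasurable
  · rw [Real.norm_eq_abs, abs_mul, abs_pow, abs_of_pos (Real.exp_pos _), zero_mul, zero_add]

lemma S_update_split (m : ℕ) (hm : 1 ≤ m) (θ : ℕ → ℝ) (t x : ℝ) :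
    S m (Function.update θ 1 t) x = S m (Function.update θ 1 0) x + t * x := by
  have h : Function.update θ 1 t
      = Function.update (Function.update θ 1 0) 1 ((Function.update θ 1 0) 1 + t) := by
    rw [Function.update_self, zero_add, Function.update_idem]
  rw [h, S_update_add m hm]

lemma hasDerivAt_int (m : ℕ) (hm : 2 ≤ m) (hme : Even m) (θ : ℕ → ℝ) (hθ : θ m < 0)
    (n : ℕ) (t₀ : ℝ) :
    HasDerivAt (fun t => ∫ x : ℝ, x ^ n * Real.exp (S m (Function.update θ 1 t) x))
      (∫ x : ℝ, x ^ (n + 1) * Real.exp (S m (Function.update θ 1 t₀) x)) t₀ := by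
  have hupd : ∀ t : ℝ, (Function.update θ 1 t) m = θ m := fun t =>
    Function.update_of_ne (by omega) _ _
  have hcont : ∀ (k : ℕ) (t : ℝ),
      Continuous (fun x : ℝ => x ^ k * Real.exp (S m (Function.update θ 1 t) x)) := by
    intro k t
    have := S_continuous m (Function.update θ 1 t); fun_prop
  have key := hasDerivAt_integral_of_dominated_loc_of_deriv_le (μ := volume)
    (F := fun t (x : ℝ) => x ^ n * Real.exp (S m (Function.update θ 1 t) x))
    (F' := fun t (x : ℝ) => x ^ (n + 1) * Real.exp (S m (Function.update θ 1 t) x))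
    (x₀ := t₀)
    (bound := fun x : ℝ =>
      |x| ^ (n + 1) * Real.exp ((|t₀| + 1) * |x| + S m (Function.update θ 1 0) x))
    (ball_mem_nhds t₀ one_pos)
    (Eventually.of_forall fun t => (hcont n t).aestronglyMeasurable)
    ?_ ((hcont (n + 1) t₀).aestronglyMeasurable)
    ?_ ?_ ?_
  · exact key.2
  · -- integrability of F t₀
    exact integrable_pow_exp m hm hme _ (by rw [hupd]; exact hθ) n
  · -- bound
    refine ae_of_all _ fun x t ht => ?_
    rw [Real.norm_eq_abs, abs_mul, abs_pow, abs_of_pos (Real.exp_pos _)]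
    refine mul_le_mul_of_nonneg_left ?_ (by positivity)
    rw [Real.exp_le_exp, S_update_split m (by omega) θ t x]
    rw [add_comm]
    refine add_le_add_left ?_ _
    calc t * x ≤ |t * x| := le_abs_self _
      _ = |t| * |x| := abs_mul _ _
      _ ≤ (|t₀| + 1) * |x| := by
          refine mul_le_mul_of_nonneg_right ?_ (abs_nonneg _)
          have := mem_ball_iff_norm.mp ht
          calc |t| = |t₀ + (t - t₀)| := by ring_nf
            _ ≤ |t₀| + |t - t₀| := abs_add_le _ _
            _ ≤ |t₀| + 1 := by rw [Real.norm_eq_abs] at this; linarith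
  · -- bound integrable
    exact integrable_full m hm hme _ (by rw [Function.update_of_ne (by omega)]; exact hθ)
      (n + 1) (|t₀| + 1)
  · -- differentiability
    refine ae_of_all _ fun x t _ => ?_
    have h1 : HasDerivAt (fun t : ℝ => S m (Function.update θ 1 t) x) x t := by
      have : (fun t : ℝ => S m (Function.update θ 1 t) x)
          = fun t : ℝ => S m (Function.update θ 1 0) x + t * x := by
        funext t; exact S_update_split m (by omega) θ t x
      rw [this]
      simpa using ((hasDerivAt_id t).mul_const x).const_add (S m (Function.update θ 1 0) x)
    have h2 := (h1.exp).const_mul (x ^ n)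
    refine h2.congr_deriv (Eq.symm ?_)
    show x ^ (n + 1) * Real.exp (S m (Function.update θ 1 t) x) = _
    rw [pow_succ]
    ring

lemma iterated_eq (m : ℕ) (hm : 2 ≤ m) (hme : Even m) (θ : ℕ → ℝ) (hθ : θ m < 0)
    (n : ℕ) (t : ℝ) :
    iteratedDeriv n (fun t => ∫ x : ℝ, Real.exp (S m (Function.update θ 1 t) x)) t
      = ∫ x : ℝ, x ^ n * Real.exp (S m (Function.update θ 1 t) x) := by
  induction n generalizing t with
  | zero => simp
  | succ n ih =>
    rw [iteratedDeriv_succ]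
    have hfun : iteratedDeriv n (fun t => ∫ x : ℝ, Real.exp (S m (Function.update θ 1 t) x))
        = fun t => ∫ x : ℝ, x ^ n * Real.exp (S m (Function.update θ 1 t) x) :=
      funext fun t => ih t
    rw [hfun]
    exact (hasDerivAt_int m hm hme θ hθ n t).deriv

lemma hasDerivAt_S (m : ℕ) (θ : ℕ → ℝ) (x : ℝ) :
    HasDerivAt (fun x => S m θ x)
      (∑ j ∈ Finset.Icc 1 m, (j : ℝ) * θ j * x ^ (j - 1)) x := by
  have h : ∀ j ∈ Finset.Icc 1 m,
      HasDerivAt (fun x : ℝ => θ j * x ^ j) ((j : ℝ) * θ j * x ^ (j - 1)) x := by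
    intro j _
    have := (hasDerivAt_pow j x).const_mul (θ j)
    refine this.congr_deriv ?_
    ring
  exact HasDerivAt.fun_sum h

lemma integral_deriv_zero (m : ℕ) (hm : 2 ≤ m) (hme : Even m) (θ : ℕ → ℝ) (hθ : θ m < 0) :
    ∫ x : ℝ, (∑ j ∈ Finset.Icc 1 m,
      ((j : ℝ) * θ j) * (x ^ (j - 1) * Real.exp (S m θ x))) = 0 := by
  set G := fun x : ℝ => Real.exp (S m θ x) with hG
  have hderiv : ∀ x : ℝ, HasDerivAt G
      (∑ j ∈ Finset.Icc 1 m, ((j : ℝ) * θ j) * (x ^ (j - 1) * Real.exp (S m θ x))) x := by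
    intro x
    have h := (hasDerivAt_S m θ x).exp
    convert h using 1
    rw [Finset.mul_sum]
    refine Finset.sum_congr rfl fun j _ => ?_
    ring
  have hint : Integrable (fun x : ℝ => ∑ j ∈ Finset.Icc 1 m,
      ((j : ℝ) * θ j) * (x ^ (j - 1) * Real.exp (S m θ x))) := by
    refine integrable_finset_sum _ fun j _ => ?_
    exact (integrable_pow_exp m hm hme θ hθ (j - 1)).const_mul _
  have htop : Tendsto G atTop (nhds 0) :=
    Real.tendsto_exp_atBot.comp (S_tendsto_atBot m (by omega) θ hθ)
  have hbot : Tendsto G atBot (nhds 0) := by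
    set c' := fun k => (-1 : ℝ) ^ k * θ k with hc'
    have hc'm : c' m < 0 := by
      rw [hc']; simp only [hme.neg_one_pow, one_mul]; exact hθ
    have h1 : Tendsto (fun x : ℝ => S m c' x) atTop atBot :=
      S_tendsto_atBot m (by omega) c' hc'm
    have h2 : Tendsto (fun x : ℝ => S m θ x) atBot atBot := by
      have := h1.comp tendsto_neg_atBot_atTop
      refine this.congr fun x => ?_
      show S m c' (-x) = S m θ x
      rw [hc']
      conv_rhs => rw [← neg_neg x, S_neg m θ (-x)]
    exact Real.tendsto_exp_atBot.comp h2
  have := integral_of_hasDerivAt_of_tendsto hderiv hint hbot htop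
  simpa using this

theorem stmt5 (d : ℕ) (hd : 1 ≤ d) (θ : ℕ → ℝ) (hθ : θ (2 * d) < 0) :
    ∑ j ∈ Finset.Icc 1 (2 * d), (j : ℝ) * θ j *
      iteratedDeriv (j - 1) (fun t => ∫ x : ℝ,
        Real.exp (∑ k ∈ Finset.Icc 1 (2 * d), Function.update θ 1 t k * x ^ k)) (θ 1)
    = 0 := by
  set m := 2 * d with hmdef
  have hm : 2 ≤ m := by omega
  have hme : Even m := ⟨d, by omega⟩
  have hiter : ∀ j : ℕ,
      iteratedDeriv (j - 1) (fun t => ∫ x : ℝ,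
        Real.exp (∑ k ∈ Finset.Icc 1 m, Function.update θ 1 t k * x ^ k)) (θ 1)
      = ∫ x : ℝ, x ^ (j - 1) * Real.exp (S m θ x) := by
    intro j
    have h := iterated_eq m hm hme θ hθ (j - 1) (θ 1)
    rw [show (fun t => ∫ x : ℝ, Real.exp (∑ k ∈ Finset.Icc 1 m,
        Function.update θ 1 t k * x ^ k))
      = (fun t => ∫ x : ℝ, Real.exp (S m (Function.update θ 1 t) x)) from rfl, h,
      Function.update_eq_self]
  calc ∑ j ∈ Finset.Icc 1 m, (j : ℝ) * θ j *
        iteratedDeriv (j - 1) (fun t => ∫ x : ℝ,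
          Real.exp (∑ k ∈ Finset.Icc 1 m, Function.update θ 1 t k * x ^ k)) (θ 1)
      = ∑ j ∈ Finset.Icc 1 m, ((j : ℝ) * θ j) * ∫ x : ℝ, x ^ (j - 1) * Real.exp (S m θ x) := by
        refine Finset.sum_congr rfl fun j _ => ?_
        rw [hiter j]
    _ = ∑ j ∈ Finset.Icc 1 m, ∫ x : ℝ,
          ((j : ℝ) * θ j) * (x ^ (j - 1) * Real.exp (S m θ x)) := by
        refine Finset.sum_congr rfl fun j _ => ?_
        rw [MeasureTheory.integral_const_mul]
    _ = ∫ x : ℝ, ∑ j ∈ Finset.Icc 1 m,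
          ((j : ℝ) * θ j) * (x ^ (j - 1) * Real.exp (S m θ x)) := by
        rw [integral_finset_sum _ fun j _ =>
          (integrable_pow_exp m hm hme θ hθ (j - 1)).const_mul _]
    _ = 0 := integral_deriv_zero m hm hme θ hθ
end

section
/- Let d ≥ 2 and let P(θ) be the (2d-2)×(2d-2) matrix whose first d-1 rows are the shifted rows (d θ_{d0}, (d-1)θ_{d-1,1}, …, 2θ_{2,d-2}, θ_{1,d-1}) placed at offsets 0,…,d-2 (zeros elsewhere), and whose last d-1 rows are the shifted rows (θ_{d-1,1}, 2θ_{d-2,2}, …, (d-1)θ_{1,d-1}, d θ_{0d}) placed at offsets 0,…,d-2. Let D(θ) be the discriminant of the polynomial p(x;θ) = θ_{d0}x^d + θ_{d-1,1}x^{d-1} + ⋯ + θ_{1,d-1}x + θ_{0d}. Then det P(θ) = d^{d-2} D(θ). -/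
/-- Sylvester matrix of a degree-`d` polynomial `p` (with descending coefficients
`a 0, a 1, …, a d`, so `p x = ∑ k, a k * x ^ (d - k)`) and its derivative `p'`:
the first `d - 1` rows carry the shifted coefficients of `p`, the last `d` rows
carry the shifted coefficients of `p'`. -/
def sylvPP' (d : ℕ) (a : ℕ → ℝ) : Matrix (Fin (2 * d - 1)) (Fin (2 * d - 1)) ℝ :=
  fun r c =>
    if (r : ℕ) < d - 1 then
      (if (r : ℕ) ≤ (c : ℕ) ∧ (c : ℕ) ≤ (r : ℕ) + d then a ((c : ℕ) - (r : ℕ)) else 0)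
    else
      (if (r : ℕ) - (d - 1) ≤ (c : ℕ) ∧ (c : ℕ) ≤ (r : ℕ) - (d - 1) + (d - 1) then
        ((d : ℝ) - ((c : ℕ) - ((r : ℕ) - (d - 1)))) * a ((c : ℕ) - ((r : ℕ) - (d - 1)))
      else 0)

/-- The `(2d-2) × (2d-2)` coefficient matrix of the Pfaffian system of the bivariate
exponential-polynomial distribution: the first `d-1` rows are the shifted rows
`(d θ_{d,0}, (d-1) θ_{d-1,1}, …, θ_{1,d-1})` and the last `d-1` rows are the shifted
rows `(θ_{d-1,1}, 2 θ_{d-2,2}, …, d θ_{0,d})`. -/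
def Pmat (d : ℕ) (θ : ℕ → ℕ → ℝ) : Matrix (Fin (2 * d - 2)) (Fin (2 * d - 2)) ℝ :=
  fun r c =>
    if (r : ℕ) < d - 1 then
      (if (r : ℕ) ≤ (c : ℕ) ∧ (c : ℕ) ≤ (r : ℕ) + (d - 1) then
        ((d : ℝ) - ((c : ℕ) - (r : ℕ))) * θ (d - ((c : ℕ) - (r : ℕ))) ((c : ℕ) - (r : ℕ))
      else 0)
    else
      (if (r : ℕ) - (d - 1) ≤ (c : ℕ) ∧ (c : ℕ) ≤ (r : ℕ) - (d - 1) + (d - 1) then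
        ((((c : ℕ) - ((r : ℕ) - (d - 1))) : ℝ) + 1) *
          θ (d - 1 - ((c : ℕ) - ((r : ℕ) - (d - 1)))) (((c : ℕ) - ((r : ℕ) - (d - 1))) + 1)
      else 0)

namespace Stmt13Aux

open Matrix Finset

lemma rot_pow_val (m k : ℕ) (i : Fin (m + 1)) :
    ((((finRotate (m + 1)) ^ k) i : Fin (m + 1)) : ℕ) = ((i : ℕ) + k) % (m + 1) := by
  induction k with
  | zero => simp [Nat.mod_eq_of_lt i.isLt]
  | succ k ih =>
      rw [pow_succ', Equiv.Perm.mul_apply, finRotate_succ_apply]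
      have h1 : ((((finRotate (m + 1)) ^ k) i : Fin (m + 1)) + 1 : Fin (m + 1)).val
          = ((((finRotate (m + 1)) ^ k) i : Fin (m + 1)).val + 1) % (m + 1) := by
        rw [Fin.val_add, Fin.val_one']
        conv_rhs => rw [Nat.add_mod, Nat.mod_eq_of_lt (Fin.isLt _)]
      rw [h1, ih, Nat.mod_add_mod, Nat.add_assoc]

/-- Cyclic rotation by `n+1` on `Fin (2n+3)`. -/
def sig (n : ℕ) : Equiv.Perm (Fin (2 * n + 2 + 1)) := (finRotate (2 * n + 2 + 1)) ^ (n + 1)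

lemma sig_val (n : ℕ) (i : Fin (2 * n + 2 + 1)) :
    ((sig n i : Fin (2 * n + 2 + 1)) : ℕ) =
      if (i : ℕ) < n + 2 then (i : ℕ) + (n + 1) else (i : ℕ) - (n + 2) := by
  have h := rot_pow_val (2 * n + 2) (n + 1) i
  have hi := i.isLt
  rw [sig]
  rw [h]
  by_cases hc : (i : ℕ) < n + 2
  · rw [if_pos hc, Nat.mod_eq_of_lt (by omega)]
  · rw [if_neg hc]
    have h2 : (i : ℕ) + (n + 1) = ((i : ℕ) - (n + 2)) + (2 * n + 2 + 1) := by omega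
    rw [h2, Nat.add_mod_right, Nat.mod_eq_of_lt (by omega)]

lemma sig_sign (n : ℕ) : Equiv.Perm.sign (sig n) = 1 := by
  rw [sig, map_pow, sign_finRotate]
  have h : 2 * n + 2 = 2 * (n + 1) := by ring
  rw [h, Nat.add_sub_cancel, pow_mul]
  norm_num

/-- The Sylvester matrix, reindexed to `Fin (2n+3)` (here `d = n+2`). -/
def T (n : ℕ) (a : ℕ → ℝ) : Matrix (Fin (2 * n + 2 + 1)) (Fin (2 * n + 2 + 1)) ℝ :=
  (sylvPP' (n + 2) a).submatrix (finCongr (by omega)) (finCongr (by omega))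

def Dg (n : ℕ) : Matrix (Fin (2 * n + 2 + 1)) (Fin (2 * n + 2 + 1)) ℝ :=
  Matrix.diagonal fun i => if (i : ℕ) < n + 1 then ((n + 2 : ℕ) : ℝ) else 1

def Mp (n : ℕ) (a : ℕ → ℝ) : Matrix (Fin (2 * n + 2 + 1)) (Fin (2 * n + 2 + 1)) ℝ :=
  (Dg n * T n a).submatrix (sig n) id

def Lm (n : ℕ) : Matrix (Fin (2 * n + 2 + 1)) (Fin (2 * n + 2 + 1)) ℝ :=
  fun i j => if i = j then 1 else
    if n + 2 ≤ (i : ℕ) ∧ (j : ℕ) + (n + 2) = (i : ℕ) then -1 else 0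

def Mm (n : ℕ) (a : ℕ → ℝ) : Matrix (Fin (2 * n + 2 + 1)) (Fin (2 * n + 2 + 1)) ℝ :=
  Lm n * Mp n a

lemma T_apply (n : ℕ) (a : ℕ → ℝ) (i j : Fin (2 * n + 2 + 1)) :
    T n a i j =
      if (i : ℕ) < n + 1 then
        (if (i : ℕ) ≤ (j : ℕ) ∧ (j : ℕ) ≤ (i : ℕ) + (n + 2) then a ((j : ℕ) - (i : ℕ)) else 0)
      else
        (if (i : ℕ) - (n + 1) ≤ (j : ℕ) ∧ (j : ℕ) ≤ (i : ℕ) - (n + 1) + (n + 1) then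
          (((n + 2 : ℕ) : ℝ) - (((j : ℕ) : ℝ) - (((i : ℕ) : ℝ) - (((n + 2 : ℕ) : ℝ) - 1)))) *
            a ((j : ℕ) - ((i : ℕ) - (n + 1)))
        else 0) := by
  have h2 : n + 2 - 1 = n + 1 := by omega
  simp only [T, Matrix.submatrix_apply, finCongr_apply, sylvPP', Fin.coe_cast, h2]

lemma Mp_apply (n : ℕ) (a : ℕ → ℝ) (i j : Fin (2 * n + 2 + 1)) :
    Mp n a i j =
      (if ((sig n i : Fin (2 * n + 2 + 1)) : ℕ) < n + 1 then ((n + 2 : ℕ) : ℝ) else 1) *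
        T n a (sig n i) j := by
  simp only [Mp, Matrix.submatrix_apply, id_eq, Dg, Matrix.diagonal_mul]

lemma mulLm (n : ℕ) (A : Matrix (Fin (2 * n + 2 + 1)) (Fin (2 * n + 2 + 1)) ℝ)
    (i j : Fin (2 * n + 2 + 1)) :
    (Lm n * A) i j =
      if h : n + 2 ≤ (i : ℕ) then A i j - A ⟨(i : ℕ) - (n + 2), by omega⟩ j else A i j := by
  rw [Matrix.mul_apply]
  have hL : ∀ k : Fin (2 * n + 2 + 1), Lm n i k * A k j
      = (if i = k then A k j else 0) +
        (if n + 2 ≤ (i : ℕ) ∧ (k : ℕ) + (n + 2) = (i : ℕ) then -(A k j) else 0) := by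
    intro k
    by_cases hk : i = k
    · subst hk
      rw [Lm, if_pos rfl, if_pos rfl, if_neg (by omega), one_mul, add_zero]
    · rw [Lm, if_neg hk, if_neg hk, zero_add]
      split_ifs <;> ring
  rw [Finset.sum_congr rfl fun k _ => hL k, Finset.sum_add_distrib, Finset.sum_ite_eq,
    if_pos (Finset.mem_univ i)]
  by_cases h : n + 2 ≤ (i : ℕ)
  · rw [dif_pos h]
    have hcond : ∀ k : Fin (2 * n + 2 + 1),
        (if n + 2 ≤ (i : ℕ) ∧ (k : ℕ) + (n + 2) = (i : ℕ) then -(A k j) else 0)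
          = (if (⟨(i : ℕ) - (n + 2), by omega⟩ : Fin (2 * n + 2 + 1)) = k
              then -(A k j) else 0) := by
      intro k
      refine if_congr ?_ rfl rfl
      constructor
      · rintro ⟨-, h2⟩
        exact Fin.ext (by show (i : ℕ) - (n + 2) = (k : ℕ); omega)
      · rintro rfl
        exact ⟨h, by show (i : ℕ) - (n + 2) + (n + 2) = (i : ℕ); omega⟩
    rw [Finset.sum_congr rfl fun k _ => hcond k, Finset.sum_ite_eq, if_pos (Finset.mem_univ _)]
    ring
  · rw [dif_neg h]
    have hcond : ∀ k : Fin (2 * n + 2 + 1),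
        (if n + 2 ≤ (i : ℕ) ∧ (k : ℕ) + (n + 2) = (i : ℕ) then -(A k j) else 0) = 0 := by
      intro k
      exact if_neg (by rintro ⟨h1, -⟩; exact h h1)
    rw [Finset.sum_congr rfl fun k _ => hcond k]
    simp

lemma Mm_apply (n : ℕ) (a : ℕ → ℝ) (i j : Fin (2 * n + 2 + 1)) :
    Mm n a i j =
      if (i : ℕ) < n + 2 then
        (if (i : ℕ) ≤ (j : ℕ) ∧ (j : ℕ) ≤ (i : ℕ) + (n + 1) then
          (((n + 2 : ℕ) : ℝ) - (((j : ℕ) - (i : ℕ) : ℕ) : ℝ)) * a ((j : ℕ) - (i : ℕ)) else 0)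
      else
        (if (i : ℕ) - (n + 2) ≤ (j : ℕ) ∧ (j : ℕ) ≤ ((i : ℕ) - (n + 2)) + (n + 2) then
          ((((j : ℕ) - ((i : ℕ) - (n + 2)) : ℕ)) : ℝ) * a ((j : ℕ) - ((i : ℕ) - (n + 2)))
        else 0) := by
  have hi := i.isLt
  rw [Mm, mulLm]
  by_cases h : n + 2 ≤ (i : ℕ)
  · rw [dif_pos h, if_neg (by omega)]
    have hs1 : ((sig n i : Fin (2 * n + 2 + 1)) : ℕ) = (i : ℕ) - (n + 2) := by
      rw [sig_val, if_neg (by omega)]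
    have hs2 : ((sig n (⟨(i : ℕ) - (n + 2), by omega⟩ : Fin (2 * n + 2 + 1)) :
        Fin (2 * n + 2 + 1)) : ℕ) = ((i : ℕ) - (n + 2)) + (n + 1) := by
      rw [sig_val]
      have hmk : ((⟨(i : ℕ) - (n + 2), by omega⟩ : Fin (2 * n + 2 + 1)) : ℕ)
          = (i : ℕ) - (n + 2) := rfl
      rw [hmk, if_pos (by omega)]
    rw [Mp_apply, Mp_apply, T_apply, T_apply, hs1, hs2]
    rw [if_pos (show (i : ℕ) - (n + 2) < n + 1 by omega),
      if_pos (show (i : ℕ) - (n + 2) < n + 1 by omega),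
      if_neg (show ¬((i : ℕ) - (n + 2) + (n + 1) < n + 1) by omega),
      if_neg (show ¬((i : ℕ) - (n + 2) + (n + 1) < n + 1) by omega), one_mul]
    simp only [Nat.add_sub_cancel]
    set r := (i : ℕ) - (n + 2) with hrd
    split_ifs with h1 h2 h2
    · rw [Nat.cast_sub h2.1]
      push_cast
      ring
    · have hc : (j : ℕ) - r = n + 2 := by omega
      rw [hc]
      ring
    · exfalso; omega
    · ring
  · rw [dif_neg h, if_pos (by omega)]
    have hs1 : ((sig n i : Fin (2 * n + 2 + 1)) : ℕ) = (i : ℕ) + (n + 1) := by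
      rw [sig_val, if_pos (by omega)]
    rw [Mp_apply, T_apply, hs1]
    rw [if_neg (show ¬((i : ℕ) + (n + 1) < n + 1) by omega),
      if_neg (show ¬((i : ℕ) + (n + 1) < n + 1) by omega), one_mul]
    simp only [Nat.add_sub_cancel]
    split_ifs with hc
    · rw [Nat.cast_sub hc.1]
      push_cast
      ring
    · rfl

lemma det_Lm (n : ℕ) : (Lm n).det = 1 := by
  have h : (Lm n).BlockTriangular OrderDual.toDual := by
    intro i j hij
    have hv : (i : ℕ) < (j : ℕ) := hij
    rw [Lm, if_neg (by intro hc; subst hc; omega), if_neg (by rintro ⟨-, h2⟩; omega)]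
  rw [Matrix.det_of_lowerTriangular (Lm n) h]
  have hdiag : ∀ i : Fin (2 * n + 2 + 1), Lm n i i = 1 := fun i => by rw [Lm, if_pos rfl]
  simp [hdiag]

lemma det_Mm (n : ℕ) (a : ℕ → ℝ) :
    (Mm n a).det = ((n + 2 : ℕ) : ℝ) ^ (n + 1) * (sylvPP' (n + 2) a).det := by
  rw [Mm, Matrix.det_mul, det_Lm, one_mul, Mp, Matrix.det_permute, sig_sign,
    Matrix.det_mul, Dg, Matrix.det_diagonal, T, Matrix.det_submatrix_equiv_self]
  have hD : (∏ i : Fin (2 * n + 2 + 1), (if (i : ℕ) < n + 1 then ((n + 2 : ℕ) : ℝ) else 1))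
      = ((n + 2 : ℕ) : ℝ) ^ (n + 1) := by
    rw [Fin.prod_univ_eq_prod_range (fun k => if k < n + 1 then ((n + 2 : ℕ) : ℝ) else 1)
        (2 * n + 2 + 1)]
    rw [show 2 * n + 2 + 1 = (n + 1) + (n + 2) by ring, Finset.prod_range_add]
    have h1 : (∏ x ∈ Finset.range (n + 1), (if x < n + 1 then ((n + 2 : ℕ) : ℝ) else 1))
        = ((n + 2 : ℕ) : ℝ) ^ (n + 1) := by
      rw [Finset.prod_congr rfl (fun x hx => if_pos (Finset.mem_range.mp hx))]
      simp
    have h2 : (∏ x ∈ Finset.range (n + 2),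
        (if (n + 1) + x < n + 1 then ((n + 2 : ℕ) : ℝ) else 1)) = 1 := by
      rw [Finset.prod_congr rfl (fun x _ => if_neg (by omega))]
      simp
    rw [h1, h2, mul_one]
  rw [hD]
  simp

theorem key (n : ℕ) (θ : ℕ → ℕ → ℝ) :
    ((n + 2 : ℕ) : ℝ) ^ (n + 1) * (sylvPP' (n + 2) (fun k => θ (n + 2 - k) k)).det
      = (((n + 2 : ℕ) : ℝ) * θ (n + 2) 0) * (Pmat (n + 2) θ).det := by
  set a : ℕ → ℝ := fun k => θ (n + 2 - k) k with ha
  rw [← det_Mm n a]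
  have hzero : ∀ b ∈ Finset.univ, b ≠ (0 : Fin (2 * n + 2 + 1)) →
      (-1 : ℝ) ^ (b : ℕ) * Mm n a b 0 *
        ((Mm n a).submatrix b.succAbove Fin.succ).det = 0 := by
    intro b _ hb
    have hbv : (b : ℕ) ≠ 0 := fun hc => hb (Fin.ext (by simpa using hc))
    have hcol : Mm n a b 0 = 0 := by
      rw [Mm_apply]
      simp only [Fin.val_zero]
      split_ifs with h1 h2 h2
      · exfalso; omega
      · exact if_neg h2
      · have hc : (b : ℕ) - (n + 2) = 0 := by omega
        rw [hc]
        simp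
      · exact if_neg h2
    rw [hcol]
    ring
  rw [Matrix.det_succ_column_zero, Finset.sum_eq_single 0 hzero (by simp)]
  have h00 : Mm n a 0 0 = ((n + 2 : ℕ) : ℝ) * a 0 := by
    rw [Mm_apply]
    simp only [Fin.val_zero]
    split_ifs with h1 h2 h2
    · norm_num
    all_goals (exfalso; omega)
  have hsub : (Mm n a).submatrix (0 : Fin (2 * n + 2 + 1)).succAbove Fin.succ
      = (Pmat (n + 2) θ).submatrix (finCongr (by omega)) (finCongr (by omega)) := by
    rw [Fin.succAbove_zero]
    ext i j
    have hiLt := i.isLt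
    have hjLt := j.isLt
    rw [Matrix.submatrix_apply, Matrix.submatrix_apply, Mm_apply]
    have hd1 : n + 2 - 1 = n + 1 := by omega
    simp only [Pmat, finCongr_apply, Fin.coe_cast, Fin.val_succ, hd1, ha]
    by_cases h1 : (i : ℕ) + 1 < n + 2
    · rw [if_pos h1, if_pos (show (i : ℕ) < n + 1 by omega)]
      have hsu : (j : ℕ) + 1 - ((i : ℕ) + 1) = (j : ℕ) - (i : ℕ) := by omega
      rw [hsu]
      split_ifs with hA hB hB
      · rw [Nat.cast_sub hB.1]
      · exfalso; omega
      · exfalso; omega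
      · rfl
    · rw [if_neg h1, if_neg (show ¬((i : ℕ) < n + 1) by omega)]
      have hr : (i : ℕ) + 1 - (n + 2) = (i : ℕ) - (n + 1) := by omega
      rw [hr]
      split_ifs with hA hB hB
      · have hsu : (j : ℕ) + 1 - ((i : ℕ) - (n + 1)) = ((j : ℕ) - ((i : ℕ) - (n + 1))) + 1 := by
          omega
        rw [hsu]
        have hsu2 : n + 2 - ((j : ℕ) - ((i : ℕ) - (n + 1)) + 1)
            = n + 1 - ((j : ℕ) - ((i : ℕ) - (n + 1))) := by omega
        rw [hsu2, Nat.cast_add, Nat.cast_one, Nat.cast_sub hB.1,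
          Nat.cast_sub (show n + 1 ≤ (i : ℕ) by omega)]
        push_cast
        ring
      · have hsu : (j : ℕ) + 1 - ((i : ℕ) - (n + 1)) = 0 := by omega
        rw [hsu]
        simp
      · exfalso; omega
      · rfl
  rw [h00, hsub, Matrix.det_submatrix_equiv_self]
  have ha0 : a 0 = θ (n + 2) 0 := rfl
  rw [ha0]
  simp

end Stmt13Aux

theorem stmt13 (d : ℕ) (hd : 2 ≤ d) (θ : ℕ → ℕ → ℝ) (hlead : θ d 0 ≠ 0) :
    (Pmat d θ).det
      = (d : ℝ) ^ (d - 2) * ((sylvPP' d (fun k => θ (d - k) k)).det / θ d 0) := by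
  obtain ⟨n, rfl⟩ : ∃ n, d = n + 2 := ⟨d - 2, by omega⟩
  have key := Stmt13Aux.key n θ
  have h2 : ((n + 2 : ℕ) : ℝ) ≠ 0 := Nat.cast_ne_zero.mpr (by omega)
  have hd2 : n + 2 - 2 = n := by omega
  rw [hd2, ← mul_div_assoc, eq_div_iff hlead]
  apply mul_left_cancel₀ h2
  linear_combination -key
end
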